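/- The set H = {0, 12, 19, 24, 28, 31, 34, 36, 38, 40, 42, 43} ∪ {n ∈ ℕ : n ≥ 45} is a numerical semigroup of multiplicity 12, and it is simultaneously a discretization of L and of F with multiplicity 12: H = ⌊12L⌋_{0.40} = ⌊12F⌋_{1.00}, where ⌊12F⌋_{1.00} = {⌊12·φ_i⌋ : i ∈ ℕ} is the flooring discretization of F. -/

import Mathlib

/-- The sequence `λ_i = log₂ (i + 1)`. -/
noncomputable def Lseq : ℕ → ℝ := fun i => Real.logb 2 (i + 1)

/-- The golden ratio `φ = (1 + √5) / 2`. -/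
noncomputable def phi : ℝ := (1 + Real.sqrt 5) / 2

/-- Given `p ∈ (0,1)` (with `q = 1 - p`), the recursively defined division functions
`f_ℓ : {0, …, 2^ℓ - 1} → [0, 1)`:
`f₀ 0 = 0`, `f_{ℓ+1} n = p * f_ℓ n` if `n < 2^ℓ`, and `f_{ℓ+1} n = p + q * f_ℓ (n - 2^ℓ)`
otherwise. -/
noncomputable def fcut (p : ℝ) : ℕ → ℕ → ℝ
  | 0, _ => 0
  | ℓ + 1, n => if n < 2 ^ ℓ then p * fcut p ℓ n else p + (1 - p) * fcut p ℓ (n - 2 ^ ℓ)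

/-- The golden fractal mold `F`:
`φ_i = ⌊log₂ (i+1)⌋ + f_{⌊log₂ (i+1)⌋} (i + 1 - 2 ^ ⌊log₂ (i+1)⌋)` with `p = φ - 1`.
(Here `⌊log₂ (i+1)⌋ = Nat.log 2 (i+1)`.) -/
noncomputable def Fgold : ℕ → ℝ := fun i =>
  (Nat.log 2 (i + 1) : ℝ) +
    fcut (phi - 1) (Nat.log 2 (i + 1)) (i + 1 - 2 ^ Nat.log 2 (i + 1))

/-- Rounding by `α`: `⌊r⌋_α = ⌊r⌋` if `r - ⌊r⌋ < α`, and `⌈r⌉` otherwise. -/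
noncomputable def floorAlpha (r α : ℝ) : ℤ := if r - ⌊r⌋ < α then ⌊r⌋ else ⌈r⌉

/-- The discretization `⌊mM⌋_α = {⌊m μ_i⌋_α : i ∈ ℕ}` of a mold `μ`, as a set of
natural numbers. -/
noncomputable def discr (μ : ℕ → ℝ) (m : ℕ) (α : ℝ) : Set ℕ :=
  {n : ℕ | ∃ i : ℕ, (n : ℤ) = floorAlpha ((m : ℝ) * μ i) α}

/-- A numerical semigroup: a subset of `ℕ` containing `0`, with finite complement,
closed under addition. -/
def IsNumSgp (S : Set ℕ) : Prop :=
  0 ∈ S ∧ Sᶜ.Finite ∧ ∀ a ∈ S, ∀ b ∈ S, a + b ∈ S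

/-- The well tempered harmonic semigroup
`H = {0, 12, 19, 24, 28, 31, 34, 36, 38, 40, 42, 43} ∪ {n : n ≥ 45}`. -/
def Hsgp : Set ℕ :=
  ({0, 12, 19, 24, 28, 31, 34, 36, 38, 40, 42, 43} : Set ℕ) ∪ {n : ℕ | 45 ≤ n}

section Infra

lemma sqrt5_sq : Real.sqrt 5 ^ 2 = 5 := Real.sq_sqrt (by norm_num)
lemma sqrt5_lo : (2.23606797 : ℝ) < Real.sqrt 5 := by
  nlinarith [sqrt5_sq, Real.sqrt_nonneg 5]
lemma sqrt5_hi : Real.sqrt 5 < 2.23606798 := by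
  nlinarith [sqrt5_sq, Real.sqrt_nonneg 5]
lemma golden_sq : (phi - 1)^2 = 1 - (phi - 1) := by
  unfold phi; linear_combination (1/4 : ℝ) * sqrt5_sq
lemma p_lo : (0.618033985 : ℝ) < phi - 1 := by unfold phi; linarith [sqrt5_lo]
lemma p_hi : phi - 1 < 0.61803399 := by unfold phi; linarith [sqrt5_hi]

lemma fcut_succ (p : ℝ) (l n : ℕ) : fcut p (l+1) n =
    if n < 2^l then p * fcut p l n else p + (1-p) * fcut p l (n - 2^l) := rfl

lemma fcut_range {p : ℝ} (hp0 : 0 ≤ p) (hp1 : p < 1) :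
    ∀ l n : ℕ, 0 ≤ fcut p l n ∧ fcut p l n < 1 := by
  intro l
  induction l with
  | zero => intro n; simp [fcut]
  | succ l ih =>
    intro n
    rw [fcut_succ]
    split
    · obtain ⟨h1, h2⟩ := ih n
      exact ⟨mul_nonneg hp0 h1, by nlinarith⟩
    · obtain ⟨h1, h2⟩ := ih (n - 2^l)
      constructor <;> nlinarith

lemma fcut_mul_two (p : ℝ) : ∀ l n, n < 2^l → fcut p (l+1) (2*n) = fcut p l n := by
  intro l
  induction l with
  | zero =>
    intro n hn
    have : n = 0 := by omega
    subst this
    simp [fcut]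
  | succ l ih =>
    intro n hn
    have hpow : 2^(l+1) = 2 * 2^l := by rw [pow_succ]; ring
    rw [fcut_succ p (l+1) (2*n), fcut_succ p l n]
    by_cases h : n < 2^l
    · rw [if_pos (by omega : 2*n < 2^(l+1)), if_pos h, ih n h]
    · rw [if_neg (by omega : ¬ (2*n < 2^(l+1))), if_neg h,
        show 2*n - 2^(l+1) = 2*(n - 2^l) by omega, ih (n - 2^l) (by omega)]

lemma fcut_shift (p : ℝ) (d j : ℕ) (hj : j < 16) :
    fcut p (4+d) (j*2^d) = fcut p 4 j := by
  induction d with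
  | zero => norm_num
  | succ d ih =>
    have h2d : (0:ℕ) < 2^d := pow_pos (by norm_num) d
    have h3 : j*2^d < 16*2^d := by exact mul_lt_mul_of_pos_right hj h2d
    have h4 : (16:ℕ)*2^d = 2^(4+d) := by rw [pow_add]; norm_num
    rw [show 4+(d+1) = (4+d)+1 by omega, show j*2^(d+1) = 2*(j*2^d) by ring,
      fcut_mul_two p (4+d) (j*2^d) (by omega), ih]

lemma floorAlpha_one (r : ℝ) : floorAlpha r 1 = ⌊r⌋ := by
  unfold floorAlpha
  rw [if_pos (by linarith [Int.lt_floor_add_one r])]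

lemma floorAlpha_eq (n : ℤ) (r α : ℝ) (hα0 : 0 < α) (hα1 : α ≤ 1)
    (h1 : (n:ℝ) - (1-α) ≤ r) (h2 : r < n + α) : floorAlpha r α = n := by
  unfold floorAlpha
  rcases le_or_gt (n:ℝ) r with h | h
  · have hf : ⌊r⌋ = n := by
      rw [Int.floor_eq_iff]; exact ⟨h, by push_cast; linarith⟩
    rw [hf, if_pos (by linarith)]
  · have hf : ⌊r⌋ = n - 1 := by
      rw [Int.floor_eq_iff]; push_cast; constructor <;> linarith
    have hc : ⌈r⌉ = n := by
      rw [Int.ceil_eq_iff]; push_cast; constructor <;> linarith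
    rw [hf, hc, if_neg]
    push_cast
    linarith

lemma floorAlpha_ge (n : ℤ) (r α : ℝ) (hα0 : 0 < α) (h1 : (n:ℝ) - (1-α) ≤ r) :
    n ≤ floorAlpha r α := by
  unfold floorAlpha
  split
  · next hcond =>
    have h3 : (n:ℝ) - 1 < (⌊r⌋:ℝ) := by linarith
    have h4 : n - 1 < ⌊r⌋ := by exact_mod_cast h3
    omega
  · have h3 : (n:ℝ) - 1 < (⌈r⌉:ℝ) := by linarith [Int.le_ceil r]
    have h4 : n - 1 < ⌈r⌉ := by exact_mod_cast h3
    omega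

lemma logb_ge (a k : ℕ) (hk : 1 ≤ k) (h : 2^a ≤ k^60) :
    (a:ℝ) ≤ 60 * Real.logb 2 (k:ℝ) := by
  have hk' : (0:ℝ) < (k:ℝ) := by exact_mod_cast hk
  have h' : (2:ℝ)^a ≤ (k:ℝ)^60 := by exact_mod_cast h
  have h2 := (Real.logb_le_logb (b := 2) (by norm_num) (by positivity) (by positivity)).mpr h'
  rw [Real.logb_pow, Real.logb_pow, Real.logb_self_eq_one (by norm_num), mul_one] at h2
  exact h2

lemma logb_lt (a k : ℕ) (hk : 1 ≤ k) (h : k^60 < 2^a) :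
    60 * Real.logb 2 (k:ℝ) < (a:ℝ) := by
  have hk' : (0:ℝ) < (k:ℝ) := by exact_mod_cast hk
  have h' : (k:ℝ)^60 < (2:ℝ)^a := by exact_mod_cast h
  have h2 := (Real.logb_lt_logb_iff (b := 2) (by norm_num) (by positivity) (by positivity)).mpr h'
  rw [Real.logb_pow, Real.logb_pow, Real.logb_self_eq_one (by norm_num), mul_one] at h2
  exact h2

lemma Lmain (k : ℕ) (n : ℤ) (hk : 1 ≤ k) (a b : ℕ)
    (hla : 2^a ≤ k^60) (hlb : k^60 < 2^b)
    (ha : (a:ℝ) = 5*(n:ℝ) - 3) (hb : (b:ℝ) = 5*(n:ℝ) + 2) :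
    floorAlpha ((12:ℝ) * Real.logb 2 (k:ℝ)) 0.40 = n := by
  have h1 := logb_ge a k hk hla
  have h2 := logb_lt b k hk hlb
  rw [ha] at h1
  rw [hb] at h2
  apply floorAlpha_eq n _ 0.40 (by norm_num) (by norm_num)
  · norm_num
    linarith
  · norm_num
    linarith

lemma floor12 (l k : ℕ) (v : ℤ) (x : ℝ) (hv : (v:ℝ) = 12*(l:ℝ) + (k:ℝ))
    (h1 : (k:ℝ) ≤ 12*x) (h2 : 12*x < (k:ℝ)+1) :
    ⌊(12:ℝ) * ((l:ℝ) + x)⌋ = v := by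
  rw [Int.floor_eq_iff]
  constructor
  · rw [hv]; linarith
  · push_cast [hv]; linarith

lemma exists_k (n : ℕ) (hn : 45 ≤ n) :
    ∃ k : ℕ, 1 ≤ k ∧ 2^(5*n-3) ≤ k^60 ∧ k^60 < 2^(5*n+2) := by
  by_cases h : n ≤ 49
  · interval_cases n
    · exact ⟨13, by norm_num⟩
    · exact ⟨14, by norm_num⟩
    · exact ⟨15, by norm_num⟩
    · exact ⟨16, by norm_num⟩
    · exact ⟨17, by norm_num⟩
  · push_neg at h
    have hex : ∃ k : ℕ, 2^(5*n-3) ≤ k^60 := by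
      refine ⟨2^n, ?_⟩
      rw [← pow_mul]
      exact Nat.pow_le_pow_right (by norm_num) (by omega)
    classical
    set k := Nat.find hex with hk
    have hspec : 2^(5*n-3) ≤ k^60 := Nat.find_spec hex
    have hk1 : 1 ≤ k := by
      rcases Nat.eq_zero_or_pos k with h0 | h0
      · exfalso
        rw [h0, Nat.zero_pow (by norm_num)] at hspec
        have : (0:ℕ) < 2^(5*n-3) := by positivity
        omega
      · exact h0
    have hk18 : 18 ≤ k := by
      by_contra hlt
      push_neg at hlt
      have h1 : k^60 ≤ 17^60 := Nat.pow_le_pow_left (by omega) 60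
      have h2 : (17:ℕ)^60 < 2^247 := by norm_num
      have h3 : (2:ℕ)^247 ≤ 2^(5*n-3) := Nat.pow_le_pow_right (by norm_num) (by omega)
      omega
    have hmin : (k-1)^60 < 2^(5*n-3) := by
      have := Nat.find_min hex (m := k - 1) (by omega)
      omega
    refine ⟨k, hk1, hspec, ?_⟩
    have hmul : 17 * k ≤ 18 * (k-1) := by omega
    have h1 : (17*k)^60 ≤ (18*(k-1))^60 := Nat.pow_le_pow_left hmul 60
    have h2 : (18:ℕ)^60 ≤ 32 * 17^60 := by norm_num
    have h3 : 17^60 * k^60 ≤ 32 * 17^60 * (k-1)^60 := by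
      calc 17^60 * k^60 = (17*k)^60 := by rw [mul_pow]
      _ ≤ (18*(k-1))^60 := h1
      _ = 18^60 * (k-1)^60 := by rw [mul_pow]
      _ ≤ 32 * 17^60 * (k-1)^60 := Nat.mul_le_mul_right _ h2
    have h4 : k^60 ≤ 32 * (k-1)^60 := by
      have h5 : 17^60 * k^60 ≤ 17^60 * (32 * (k-1)^60) := by
        calc 17^60 * k^60 ≤ 32 * 17^60 * (k-1)^60 := h3
        _ = 17^60 * (32 * (k-1)^60) := by ring
      exact Nat.le_of_mul_le_mul_left h5 (by positivity)
    calc k^60 ≤ 32 * (k-1)^60 := h4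
      _ < 32 * 2^(5*n-3) := by
          exact (Nat.mul_lt_mul_left (by norm_num : (0:ℕ) < 32)).mpr hmin
      _ = 2^(5*n+2) := by
          rw [show (32:ℕ) = 2^5 from rfl, ← pow_add]
          congr 1
          omega

lemma FGwit (l j : ℕ) (hl : 4 ≤ l) (hj : j < 16) :
    Fgold (2^l + j*2^(l-4) - 1) = ((l:ℕ):ℝ) + fcut (phi-1) 4 j := by
  have h2l : (0:ℕ) < 2^l := pow_pos (by norm_num) l
  have h16 : (16:ℕ)*2^(l-4) = 2^l := by
    rw [show (16:ℕ) = 2^4 from rfl, ← pow_add]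
    congr 1
    omega
  have hd : (0:ℕ) < 2^(l-4) := pow_pos (by norm_num) (l-4)
  have hj' : j*2^(l-4) < 2^l := by
    have := mul_lt_mul_of_pos_right hj hd
    omega
  have hm : 2^l + j*2^(l-4) - 1 + 1 = 2^l + j*2^(l-4) := by omega
  have hlog : Nat.log 2 (2^l + j*2^(l-4)) = l := by
    apply Nat.log_eq_of_pow_le_of_lt_pow (by omega)
    have : 2^(l+1) = 2*2^l := by rw [pow_succ]; ring
    omega
  unfold Fgold
  rw [hm, hlog]
  congr 1
  have hsub : 2^l + j*2^(l-4) - 2^l = j*2^(l-4) := by omega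
  rw [hsub]
  obtain ⟨d, rfl⟩ : ∃ d, l = 4 + d := ⟨l - 4, by omega⟩
  rw [show (4+d) - 4 = d by omega, fcut_shift (phi-1) d j hj]

end Infra

lemma fc_0_0 : fcut (phi-1) 0 0 = (0 : ℝ) + (0 : ℝ) * (phi-1) := by
  norm_num [fcut] <;> ring
lemma ff_0_0 : (0:ℝ) ≤ 12 * fcut (phi-1) 0 0 ∧ 12 * fcut (phi-1) 0 0 < 0+1 := by
  rw [fc_0_0]; constructor <;> nlinarith [p_lo, p_hi]
lemma fc_1_0 : fcut (phi-1) 1 0 = (0 : ℝ) + (0 : ℝ) * (phi-1) := by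
  norm_num [fcut] <;> ring
lemma ff_1_0 : (0:ℝ) ≤ 12 * fcut (phi-1) 1 0 ∧ 12 * fcut (phi-1) 1 0 < 0+1 := by
  rw [fc_1_0]; constructor <;> nlinarith [p_lo, p_hi]
lemma fc_1_1 : fcut (phi-1) 1 1 = (0 : ℝ) + (1 : ℝ) * (phi-1) := by
  norm_num [fcut] <;> ring
lemma ff_1_1 : (7:ℝ) ≤ 12 * fcut (phi-1) 1 1 ∧ 12 * fcut (phi-1) 1 1 < 7+1 := by
  rw [fc_1_1]; constructor <;> nlinarith [p_lo, p_hi]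
lemma fc_2_0 : fcut (phi-1) 2 0 = (0 : ℝ) + (0 : ℝ) * (phi-1) := by
  norm_num [fcut] <;> ring
lemma ff_2_0 : (0:ℝ) ≤ 12 * fcut (phi-1) 2 0 ∧ 12 * fcut (phi-1) 2 0 < 0+1 := by
  rw [fc_2_0]; constructor <;> nlinarith [p_lo, p_hi]
lemma fc_2_1 : fcut (phi-1) 2 1 = (1 : ℝ) + (-1 : ℝ) * (phi-1) := by
  norm_num [fcut] <;> linear_combination ((1 : ℝ)) * golden_sq
lemma ff_2_1 : (4:ℝ) ≤ 12 * fcut (phi-1) 2 1 ∧ 12 * fcut (phi-1) 2 1 < 4+1 := by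
  rw [fc_2_1]; constructor <;> nlinarith [p_lo, p_hi]
lemma fc_2_2 : fcut (phi-1) 2 2 = (0 : ℝ) + (1 : ℝ) * (phi-1) := by
  norm_num [fcut] <;> ring
lemma ff_2_2 : (7:ℝ) ≤ 12 * fcut (phi-1) 2 2 ∧ 12 * fcut (phi-1) 2 2 < 7+1 := by
  rw [fc_2_2]; constructor <;> nlinarith [p_lo, p_hi]
lemma fc_2_3 : fcut (phi-1) 2 3 = (-1 : ℝ) + (3 : ℝ) * (phi-1) := by
  norm_num [fcut] <;> linear_combination ((-1 : ℝ)) * golden_sq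
lemma ff_2_3 : (10:ℝ) ≤ 12 * fcut (phi-1) 2 3 ∧ 12 * fcut (phi-1) 2 3 < 10+1 := by
  rw [fc_2_3]; constructor <;> nlinarith [p_lo, p_hi]
lemma fc_3_0 : fcut (phi-1) 3 0 = (0 : ℝ) + (0 : ℝ) * (phi-1) := by
  norm_num [fcut] <;> ring
lemma ff_3_0 : (0:ℝ) ≤ 12 * fcut (phi-1) 3 0 ∧ 12 * fcut (phi-1) 3 0 < 0+1 := by
  rw [fc_3_0]; constructor <;> nlinarith [p_lo, p_hi]
lemma fc_3_1 : fcut (phi-1) 3 1 = (-1 : ℝ) + (2 : ℝ) * (phi-1) := by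
  norm_num [fcut] <;> linear_combination ((-1 : ℝ)) * golden_sq + ((1 : ℝ) * (phi-1)) * golden_sq
lemma ff_3_1 : (2:ℝ) ≤ 12 * fcut (phi-1) 3 1 ∧ 12 * fcut (phi-1) 3 1 < 2+1 := by
  rw [fc_3_1]; constructor <;> nlinarith [p_lo, p_hi]
lemma fc_3_2 : fcut (phi-1) 3 2 = (1 : ℝ) + (-1 : ℝ) * (phi-1) := by
  norm_num [fcut] <;> linear_combination ((1 : ℝ)) * golden_sq
lemma ff_3_2 : (4:ℝ) ≤ 12 * fcut (phi-1) 3 2 ∧ 12 * fcut (phi-1) 3 2 < 4+1 := by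
  rw [fc_3_2]; constructor <;> nlinarith [p_lo, p_hi]
lemma fc_3_3 : fcut (phi-1) 3 3 = (3 : ℝ) + (-4 : ℝ) * (phi-1) := by
  norm_num [fcut] <;> linear_combination ((3 : ℝ)) * golden_sq + ((-1 : ℝ) * (phi-1)) * golden_sq
lemma ff_3_3 : (6:ℝ) ≤ 12 * fcut (phi-1) 3 3 ∧ 12 * fcut (phi-1) 3 3 < 6+1 := by
  rw [fc_3_3]; constructor <;> nlinarith [p_lo, p_hi]
lemma fc_3_4 : fcut (phi-1) 3 4 = (0 : ℝ) + (1 : ℝ) * (phi-1) := by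
  norm_num [fcut] <;> ring
lemma ff_3_4 : (7:ℝ) ≤ 12 * fcut (phi-1) 3 4 ∧ 12 * fcut (phi-1) 3 4 < 7+1 := by
  rw [fc_3_4]; constructor <;> nlinarith [p_lo, p_hi]
lemma fc_3_5 : fcut (phi-1) 3 5 = (2 : ℝ) + (-2 : ℝ) * (phi-1) := by
  norm_num [fcut] <;> linear_combination ((2 : ℝ)) * golden_sq + ((-1 : ℝ) * (phi-1)) * golden_sq
lemma ff_3_5 : (9:ℝ) ≤ 12 * fcut (phi-1) 3 5 ∧ 12 * fcut (phi-1) 3 5 < 9+1 := by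
  rw [fc_3_5]; constructor <;> nlinarith [p_lo, p_hi]
lemma fc_3_6 : fcut (phi-1) 3 6 = (-1 : ℝ) + (3 : ℝ) * (phi-1) := by
  norm_num [fcut] <;> linear_combination ((-1 : ℝ)) * golden_sq
lemma ff_3_6 : (10:ℝ) ≤ 12 * fcut (phi-1) 3 6 ∧ 12 * fcut (phi-1) 3 6 < 10+1 := by
  rw [fc_3_6]; constructor <;> nlinarith [p_lo, p_hi]
lemma fc_3_7 : fcut (phi-1) 3 7 = (-4 : ℝ) + (8 : ℝ) * (phi-1) := by
  norm_num [fcut] <;> linear_combination ((-4 : ℝ)) * golden_sq + ((1 : ℝ) * (phi-1)) * golden_sq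
lemma ff_3_7 : (11:ℝ) ≤ 12 * fcut (phi-1) 3 7 ∧ 12 * fcut (phi-1) 3 7 < 11+1 := by
  rw [fc_3_7]; constructor <;> nlinarith [p_lo, p_hi]
lemma fc_4_0 : fcut (phi-1) 4 0 = (0 : ℝ) + (0 : ℝ) * (phi-1) := by
  norm_num [fcut] <;> ring
lemma ff_4_0 : (0:ℝ) ≤ 12 * fcut (phi-1) 4 0 ∧ 12 * fcut (phi-1) 4 0 < 0+1 := by
  rw [fc_4_0]; constructor <;> nlinarith [p_lo, p_hi]
lemma fc_4_1 : fcut (phi-1) 4 1 = (2 : ℝ) + (-3 : ℝ) * (phi-1) := by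
  norm_num [fcut] <;> linear_combination ((2 : ℝ)) * golden_sq + ((-1 : ℝ) * (phi-1)) * golden_sq + ((1 : ℝ) * (phi-1)^2) * golden_sq
lemma ff_4_1 : (1:ℝ) ≤ 12 * fcut (phi-1) 4 1 ∧ 12 * fcut (phi-1) 4 1 < 1+1 := by
  rw [fc_4_1]; constructor <;> nlinarith [p_lo, p_hi]
lemma fc_4_2 : fcut (phi-1) 4 2 = (-1 : ℝ) + (2 : ℝ) * (phi-1) := by
  norm_num [fcut] <;> linear_combination ((-1 : ℝ)) * golden_sq + ((1 : ℝ) * (phi-1)) * golden_sq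
lemma ff_4_2 : (2:ℝ) ≤ 12 * fcut (phi-1) 4 2 ∧ 12 * fcut (phi-1) 4 2 < 2+1 := by
  rw [fc_4_2]; constructor <;> nlinarith [p_lo, p_hi]
lemma fc_4_3 : fcut (phi-1) 4 3 = (-4 : ℝ) + (7 : ℝ) * (phi-1) := by
  norm_num [fcut] <;> linear_combination ((-4 : ℝ)) * golden_sq + ((3 : ℝ) * (phi-1)) * golden_sq + ((-1 : ℝ) * (phi-1)^2) * golden_sq
lemma ff_4_3 : (3:ℝ) ≤ 12 * fcut (phi-1) 4 3 ∧ 12 * fcut (phi-1) 4 3 < 3+1 := by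
  rw [fc_4_3]; constructor <;> nlinarith [p_lo, p_hi]
lemma fc_4_4 : fcut (phi-1) 4 4 = (1 : ℝ) + (-1 : ℝ) * (phi-1) := by
  norm_num [fcut] <;> linear_combination ((1 : ℝ)) * golden_sq
lemma ff_4_4 : (4:ℝ) ≤ 12 * fcut (phi-1) 4 4 ∧ 12 * fcut (phi-1) 4 4 < 4+1 := by
  rw [fc_4_4]; constructor <;> nlinarith [p_lo, p_hi]
lemma fc_4_5 : fcut (phi-1) 4 5 = (-2 : ℝ) + (4 : ℝ) * (phi-1) := by
  norm_num [fcut] <;> linear_combination ((-2 : ℝ)) * golden_sq + ((2 : ℝ) * (phi-1)) * golden_sq + ((-1 : ℝ) * (phi-1)^2) * golden_sq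
lemma ff_4_5 : (5:ℝ) ≤ 12 * fcut (phi-1) 4 5 ∧ 12 * fcut (phi-1) 4 5 < 5+1 := by
  rw [fc_4_5]; constructor <;> nlinarith [p_lo, p_hi]
lemma fc_4_6 : fcut (phi-1) 4 6 = (3 : ℝ) + (-4 : ℝ) * (phi-1) := by
  norm_num [fcut] <;> linear_combination ((3 : ℝ)) * golden_sq + ((-1 : ℝ) * (phi-1)) * golden_sq
lemma ff_4_6 : (6:ℝ) ≤ 12 * fcut (phi-1) 4 6 ∧ 12 * fcut (phi-1) 4 6 < 6+1 := by
  rw [fc_4_6]; constructor <;> nlinarith [p_lo, p_hi]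
lemma fc_4_7 : fcut (phi-1) 4 7 = (8 : ℝ) + (-12 : ℝ) * (phi-1) := by
  norm_num [fcut] <;> linear_combination ((8 : ℝ)) * golden_sq + ((-4 : ℝ) * (phi-1)) * golden_sq + ((1 : ℝ) * (phi-1)^2) * golden_sq
lemma ff_4_7 : (7:ℝ) ≤ 12 * fcut (phi-1) 4 7 ∧ 12 * fcut (phi-1) 4 7 < 7+1 := by
  rw [fc_4_7]; constructor <;> nlinarith [p_lo, p_hi]
lemma fc_4_8 : fcut (phi-1) 4 8 = (0 : ℝ) + (1 : ℝ) * (phi-1) := by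
  norm_num [fcut] <;> ring
lemma ff_4_8 : (7:ℝ) ≤ 12 * fcut (phi-1) 4 8 ∧ 12 * fcut (phi-1) 4 8 < 7+1 := by
  rw [fc_4_8]; constructor <;> nlinarith [p_lo, p_hi]
lemma fc_4_9 : fcut (phi-1) 4 9 = (-3 : ℝ) + (6 : ℝ) * (phi-1) := by
  norm_num [fcut] <;> linear_combination ((-3 : ℝ)) * golden_sq + ((2 : ℝ) * (phi-1)) * golden_sq + ((-1 : ℝ) * (phi-1)^2) * golden_sq
lemma ff_4_9 : (8:ℝ) ≤ 12 * fcut (phi-1) 4 9 ∧ 12 * fcut (phi-1) 4 9 < 8+1 := by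
  rw [fc_4_9]; constructor <;> nlinarith [p_lo, p_hi]
lemma fc_4_10 : fcut (phi-1) 4 10 = (2 : ℝ) + (-2 : ℝ) * (phi-1) := by
  norm_num [fcut] <;> linear_combination ((2 : ℝ)) * golden_sq + ((-1 : ℝ) * (phi-1)) * golden_sq
lemma ff_4_10 : (9:ℝ) ≤ 12 * fcut (phi-1) 4 10 ∧ 12 * fcut (phi-1) 4 10 < 9+1 := by
  rw [fc_4_10]; constructor <;> nlinarith [p_lo, p_hi]
lemma fc_4_11 : fcut (phi-1) 4 11 = (7 : ℝ) + (-10 : ℝ) * (phi-1) := by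
  norm_num [fcut] <;> linear_combination ((7 : ℝ)) * golden_sq + ((-4 : ℝ) * (phi-1)) * golden_sq + ((1 : ℝ) * (phi-1)^2) * golden_sq
lemma ff_4_11 : (9:ℝ) ≤ 12 * fcut (phi-1) 4 11 ∧ 12 * fcut (phi-1) 4 11 < 9+1 := by
  rw [fc_4_11]; constructor <;> nlinarith [p_lo, p_hi]
lemma fc_4_12 : fcut (phi-1) 4 12 = (-1 : ℝ) + (3 : ℝ) * (phi-1) := by
  norm_num [fcut] <;> linear_combination ((-1 : ℝ)) * golden_sq
lemma ff_4_12 : (10:ℝ) ≤ 12 * fcut (phi-1) 4 12 ∧ 12 * fcut (phi-1) 4 12 < 10+1 := by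
  rw [fc_4_12]; constructor <;> nlinarith [p_lo, p_hi]
lemma fc_4_13 : fcut (phi-1) 4 13 = (4 : ℝ) + (-5 : ℝ) * (phi-1) := by
  norm_num [fcut] <;> linear_combination ((4 : ℝ)) * golden_sq + ((-3 : ℝ) * (phi-1)) * golden_sq + ((1 : ℝ) * (phi-1)^2) * golden_sq
lemma ff_4_13 : (10:ℝ) ≤ 12 * fcut (phi-1) 4 13 ∧ 12 * fcut (phi-1) 4 13 < 10+1 := by
  rw [fc_4_13]; constructor <;> nlinarith [p_lo, p_hi]
lemma fc_4_14 : fcut (phi-1) 4 14 = (-4 : ℝ) + (8 : ℝ) * (phi-1) := by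
  norm_num [fcut] <;> linear_combination ((-4 : ℝ)) * golden_sq + ((1 : ℝ) * (phi-1)) * golden_sq
lemma ff_4_14 : (11:ℝ) ≤ 12 * fcut (phi-1) 4 14 ∧ 12 * fcut (phi-1) 4 14 < 11+1 := by
  rw [fc_4_14]; constructor <;> nlinarith [p_lo, p_hi]
lemma fc_4_15 : fcut (phi-1) 4 15 = (-12 : ℝ) + (21 : ℝ) * (phi-1) := by
  norm_num [fcut] <;> linear_combination ((-12 : ℝ)) * golden_sq + ((5 : ℝ) * (phi-1)) * golden_sq + ((-1 : ℝ) * (phi-1)^2) * golden_sq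
lemma ff_4_15 : (11:ℝ) ≤ 12 * fcut (phi-1) 4 15 ∧ 12 * fcut (phi-1) 4 15 < 11+1 := by
  rw [fc_4_15]; constructor <;> nlinarith [p_lo, p_hi]
lemma LV0 : floorAlpha ((12:ℝ) * Lseq 0) 0.40 = 0 := by
  have e : Lseq 0 = 0 := by norm_num [Lseq]
  rw [e]; norm_num [floorAlpha]
lemma LV1 : floorAlpha ((12:ℝ) * Lseq 1) 0.40 = 12 := by
  have e : Lseq 1 = Real.logb 2 ((2:ℕ):ℝ) := by norm_num [Lseq]
  rw [e]
  exact Lmain 2 12 (by norm_num) 57 62 (by norm_num) (by norm_num) (by norm_num) (by norm_num)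
lemma LV2 : floorAlpha ((12:ℝ) * Lseq 2) 0.40 = 19 := by
  have e : Lseq 2 = Real.logb 2 ((3:ℕ):ℝ) := by norm_num [Lseq]
  rw [e]
  exact Lmain 3 19 (by norm_num) 92 97 (by norm_num) (by norm_num) (by norm_num) (by norm_num)
lemma LV3 : floorAlpha ((12:ℝ) * Lseq 3) 0.40 = 24 := by
  have e : Lseq 3 = Real.logb 2 ((4:ℕ):ℝ) := by norm_num [Lseq]
  rw [e]
  exact Lmain 4 24 (by norm_num) 117 122 (by norm_num) (by norm_num) (by norm_num) (by norm_num)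
lemma LV4 : floorAlpha ((12:ℝ) * Lseq 4) 0.40 = 28 := by
  have e : Lseq 4 = Real.logb 2 ((5:ℕ):ℝ) := by norm_num [Lseq]
  rw [e]
  exact Lmain 5 28 (by norm_num) 137 142 (by norm_num) (by norm_num) (by norm_num) (by norm_num)
lemma LV5 : floorAlpha ((12:ℝ) * Lseq 5) 0.40 = 31 := by
  have e : Lseq 5 = Real.logb 2 ((6:ℕ):ℝ) := by norm_num [Lseq]
  rw [e]
  exact Lmain 6 31 (by norm_num) 152 157 (by norm_num) (by norm_num) (by norm_num) (by norm_num)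
lemma LV6 : floorAlpha ((12:ℝ) * Lseq 6) 0.40 = 34 := by
  have e : Lseq 6 = Real.logb 2 ((7:ℕ):ℝ) := by norm_num [Lseq]
  rw [e]
  exact Lmain 7 34 (by norm_num) 167 172 (by norm_num) (by norm_num) (by norm_num) (by norm_num)
lemma LV7 : floorAlpha ((12:ℝ) * Lseq 7) 0.40 = 36 := by
  have e : Lseq 7 = Real.logb 2 ((8:ℕ):ℝ) := by norm_num [Lseq]
  rw [e]
  exact Lmain 8 36 (by norm_num) 177 182 (by norm_num) (by norm_num) (by norm_num) (by norm_num)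
lemma LV8 : floorAlpha ((12:ℝ) * Lseq 8) 0.40 = 38 := by
  have e : Lseq 8 = Real.logb 2 ((9:ℕ):ℝ) := by norm_num [Lseq]
  rw [e]
  exact Lmain 9 38 (by norm_num) 187 192 (by norm_num) (by norm_num) (by norm_num) (by norm_num)
lemma LV9 : floorAlpha ((12:ℝ) * Lseq 9) 0.40 = 40 := by
  have e : Lseq 9 = Real.logb 2 ((10:ℕ):ℝ) := by norm_num [Lseq]
  rw [e]
  exact Lmain 10 40 (by norm_num) 197 202 (by norm_num) (by norm_num) (by norm_num) (by norm_num)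
lemma LV10 : floorAlpha ((12:ℝ) * Lseq 10) 0.40 = 42 := by
  have e : Lseq 10 = Real.logb 2 ((11:ℕ):ℝ) := by norm_num [Lseq]
  rw [e]
  exact Lmain 11 42 (by norm_num) 207 212 (by norm_num) (by norm_num) (by norm_num) (by norm_num)
lemma LV11 : floorAlpha ((12:ℝ) * Lseq 11) 0.40 = 43 := by
  have e : Lseq 11 = Real.logb 2 ((12:ℕ):ℝ) := by norm_num [Lseq]
  rw [e]
  exact Lmain 12 43 (by norm_num) 212 217 (by norm_num) (by norm_num) (by norm_num) (by norm_num)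
lemma FG0 : floorAlpha ((12:ℝ) * Fgold 0) 1 = 0 := by
  rw [floorAlpha_one]
  have hl : Nat.log 2 1 = 0 := Nat.log_eq_of_pow_le_of_lt_pow (by norm_num) (by norm_num)
  have e : Fgold 0 = ((0:ℕ):ℝ) + fcut (phi-1) 0 0 := by
    simp only [Fgold]; norm_num [hl]
  rw [e]
  exact floor12 0 0 0 _ (by push_cast; norm_num)
    (by exact_mod_cast (ff_0_0).1) (by exact_mod_cast (ff_0_0).2)
lemma FG1 : floorAlpha ((12:ℝ) * Fgold 1) 1 = 12 := by
  rw [floorAlpha_one]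
  have hl : Nat.log 2 2 = 1 := Nat.log_eq_of_pow_le_of_lt_pow (by norm_num) (by norm_num)
  have e : Fgold 1 = ((1:ℕ):ℝ) + fcut (phi-1) 1 0 := by
    simp only [Fgold]; norm_num [hl]
  rw [e]
  exact floor12 1 0 12 _ (by push_cast; norm_num)
    (by exact_mod_cast (ff_1_0).1) (by exact_mod_cast (ff_1_0).2)
lemma FG2 : floorAlpha ((12:ℝ) * Fgold 2) 1 = 19 := by
  rw [floorAlpha_one]
  have hl : Nat.log 2 3 = 1 := Nat.log_eq_of_pow_le_of_lt_pow (by norm_num) (by norm_num)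
  have e : Fgold 2 = ((1:ℕ):ℝ) + fcut (phi-1) 1 1 := by
    simp only [Fgold]; norm_num [hl]
  rw [e]
  exact floor12 1 7 19 _ (by push_cast; norm_num)
    (by exact_mod_cast (ff_1_1).1) (by exact_mod_cast (ff_1_1).2)
lemma FG3 : floorAlpha ((12:ℝ) * Fgold 3) 1 = 24 := by
  rw [floorAlpha_one]
  have hl : Nat.log 2 4 = 2 := Nat.log_eq_of_pow_le_of_lt_pow (by norm_num) (by norm_num)
  have e : Fgold 3 = ((2:ℕ):ℝ) + fcut (phi-1) 2 0 := by
    simp only [Fgold]; norm_num [hl]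
  rw [e]
  exact floor12 2 0 24 _ (by push_cast; norm_num)
    (by exact_mod_cast (ff_2_0).1) (by exact_mod_cast (ff_2_0).2)
lemma FG4 : floorAlpha ((12:ℝ) * Fgold 4) 1 = 28 := by
  rw [floorAlpha_one]
  have hl : Nat.log 2 5 = 2 := Nat.log_eq_of_pow_le_of_lt_pow (by norm_num) (by norm_num)
  have e : Fgold 4 = ((2:ℕ):ℝ) + fcut (phi-1) 2 1 := by
    simp only [Fgold]; norm_num [hl]
  rw [e]
  exact floor12 2 4 28 _ (by push_cast; norm_num)
    (by exact_mod_cast (ff_2_1).1) (by exact_mod_cast (ff_2_1).2)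
lemma FG5 : floorAlpha ((12:ℝ) * Fgold 5) 1 = 31 := by
  rw [floorAlpha_one]
  have hl : Nat.log 2 6 = 2 := Nat.log_eq_of_pow_le_of_lt_pow (by norm_num) (by norm_num)
  have e : Fgold 5 = ((2:ℕ):ℝ) + fcut (phi-1) 2 2 := by
    simp only [Fgold]; norm_num [hl]
  rw [e]
  exact floor12 2 7 31 _ (by push_cast; norm_num)
    (by exact_mod_cast (ff_2_2).1) (by exact_mod_cast (ff_2_2).2)
lemma FG6 : floorAlpha ((12:ℝ) * Fgold 6) 1 = 34 := by
  rw [floorAlpha_one]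
  have hl : Nat.log 2 7 = 2 := Nat.log_eq_of_pow_le_of_lt_pow (by norm_num) (by norm_num)
  have e : Fgold 6 = ((2:ℕ):ℝ) + fcut (phi-1) 2 3 := by
    simp only [Fgold]; norm_num [hl]
  rw [e]
  exact floor12 2 10 34 _ (by push_cast; norm_num)
    (by exact_mod_cast (ff_2_3).1) (by exact_mod_cast (ff_2_3).2)
lemma FG7 : floorAlpha ((12:ℝ) * Fgold 7) 1 = 36 := by
  rw [floorAlpha_one]
  have hl : Nat.log 2 8 = 3 := Nat.log_eq_of_pow_le_of_lt_pow (by norm_num) (by norm_num)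
  have e : Fgold 7 = ((3:ℕ):ℝ) + fcut (phi-1) 3 0 := by
    simp only [Fgold]; norm_num [hl]
  rw [e]
  exact floor12 3 0 36 _ (by push_cast; norm_num)
    (by exact_mod_cast (ff_3_0).1) (by exact_mod_cast (ff_3_0).2)
lemma FG8 : floorAlpha ((12:ℝ) * Fgold 8) 1 = 38 := by
  rw [floorAlpha_one]
  have hl : Nat.log 2 9 = 3 := Nat.log_eq_of_pow_le_of_lt_pow (by norm_num) (by norm_num)
  have e : Fgold 8 = ((3:ℕ):ℝ) + fcut (phi-1) 3 1 := by
    simp only [Fgold]; norm_num [hl]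
  rw [e]
  exact floor12 3 2 38 _ (by push_cast; norm_num)
    (by exact_mod_cast (ff_3_1).1) (by exact_mod_cast (ff_3_1).2)
lemma FG9 : floorAlpha ((12:ℝ) * Fgold 9) 1 = 40 := by
  rw [floorAlpha_one]
  have hl : Nat.log 2 10 = 3 := Nat.log_eq_of_pow_le_of_lt_pow (by norm_num) (by norm_num)
  have e : Fgold 9 = ((3:ℕ):ℝ) + fcut (phi-1) 3 2 := by
    simp only [Fgold]; norm_num [hl]
  rw [e]
  exact floor12 3 4 40 _ (by push_cast; norm_num)
    (by exact_mod_cast (ff_3_2).1) (by exact_mod_cast (ff_3_2).2)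
lemma FG10 : floorAlpha ((12:ℝ) * Fgold 10) 1 = 42 := by
  rw [floorAlpha_one]
  have hl : Nat.log 2 11 = 3 := Nat.log_eq_of_pow_le_of_lt_pow (by norm_num) (by norm_num)
  have e : Fgold 10 = ((3:ℕ):ℝ) + fcut (phi-1) 3 3 := by
    simp only [Fgold]; norm_num [hl]
  rw [e]
  exact floor12 3 6 42 _ (by push_cast; norm_num)
    (by exact_mod_cast (ff_3_3).1) (by exact_mod_cast (ff_3_3).2)
lemma FG11 : floorAlpha ((12:ℝ) * Fgold 11) 1 = 43 := by
  rw [floorAlpha_one]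
  have hl : Nat.log 2 12 = 3 := Nat.log_eq_of_pow_le_of_lt_pow (by norm_num) (by norm_num)
  have e : Fgold 11 = ((3:ℕ):ℝ) + fcut (phi-1) 3 4 := by
    simp only [Fgold]; norm_num [hl]
  rw [e]
  exact floor12 3 7 43 _ (by push_cast; norm_num)
    (by exact_mod_cast (ff_3_4).1) (by exact_mod_cast (ff_3_4).2)
lemma FG12 : floorAlpha ((12:ℝ) * Fgold 12) 1 = 45 := by
  rw [floorAlpha_one]
  have hl : Nat.log 2 13 = 3 := Nat.log_eq_of_pow_le_of_lt_pow (by norm_num) (by norm_num)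
  have e : Fgold 12 = ((3:ℕ):ℝ) + fcut (phi-1) 3 5 := by
    simp only [Fgold]; norm_num [hl]
  rw [e]
  exact floor12 3 9 45 _ (by push_cast; norm_num)
    (by exact_mod_cast (ff_3_5).1) (by exact_mod_cast (ff_3_5).2)
lemma FG13 : floorAlpha ((12:ℝ) * Fgold 13) 1 = 46 := by
  rw [floorAlpha_one]
  have hl : Nat.log 2 14 = 3 := Nat.log_eq_of_pow_le_of_lt_pow (by norm_num) (by norm_num)
  have e : Fgold 13 = ((3:ℕ):ℝ) + fcut (phi-1) 3 6 := by
    simp only [Fgold]; norm_num [hl]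
  rw [e]
  exact floor12 3 10 46 _ (by push_cast; norm_num)
    (by exact_mod_cast (ff_3_6).1) (by exact_mod_cast (ff_3_6).2)
lemma FG14 : floorAlpha ((12:ℝ) * Fgold 14) 1 = 47 := by
  rw [floorAlpha_one]
  have hl : Nat.log 2 15 = 3 := Nat.log_eq_of_pow_le_of_lt_pow (by norm_num) (by norm_num)
  have e : Fgold 14 = ((3:ℕ):ℝ) + fcut (phi-1) 3 7 := by
    simp only [Fgold]; norm_num [hl]
  rw [e]
  exact floor12 3 11 47 _ (by push_cast; norm_num)
    (by exact_mod_cast (ff_3_7).1) (by exact_mod_cast (ff_3_7).2)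

lemma hL_discr : Hsgp = discr Lseq 12 0.40 := by
  ext n
  simp only [discr, Set.mem_setOf_eq, Nat.cast_ofNat]
  constructor
  · intro hn
    simp only [Hsgp, Set.mem_union, Set.mem_insert_iff, Set.mem_singleton_iff,
      Set.mem_setOf_eq] at hn
    rcases hn with (h|h|h|h|h|h|h|h|h|h|h|h) | h
    · exact ⟨0, by subst h; rw [LV0]; norm_num⟩
    · exact ⟨1, by subst h; rw [LV1]; norm_num⟩
    · exact ⟨2, by subst h; rw [LV2]; norm_num⟩
    · exact ⟨3, by subst h; rw [LV3]; norm_num⟩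
    · exact ⟨4, by subst h; rw [LV4]; norm_num⟩
    · exact ⟨5, by subst h; rw [LV5]; norm_num⟩
    · exact ⟨6, by subst h; rw [LV6]; norm_num⟩
    · exact ⟨7, by subst h; rw [LV7]; norm_num⟩
    · exact ⟨8, by subst h; rw [LV8]; norm_num⟩
    · exact ⟨9, by subst h; rw [LV9]; norm_num⟩
    · exact ⟨10, by subst h; rw [LV10]; norm_num⟩
    · exact ⟨11, by subst h; rw [LV11]; norm_num⟩
    · obtain ⟨k, hk1, hla, hlb⟩ := exists_k n h
      refine ⟨k-1, ?_⟩
      have eL : Lseq (k-1) = Real.logb 2 ((k:ℕ):ℝ) := by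
        unfold Lseq
        rw [show ((k-1:ℕ):ℝ)+1 = ((k:ℕ):ℝ) from by
          rw [Nat.cast_sub hk1]; push_cast; ring]
      rw [eL, Lmain k (n:ℤ) hk1 (5*n-3) (5*n+2) hla hlb
        (by push_cast [Nat.cast_sub (show 3 ≤ 5*n by omega)]; ring)
        (by push_cast; ring)]
  · rintro ⟨i, hi⟩
    by_cases hc : i ≤ 11
    · interval_cases i
      · rw [LV0] at hi; simp [Hsgp]; omega
      · rw [LV1] at hi; simp [Hsgp]; omega
      · rw [LV2] at hi; simp [Hsgp]; omega
      · rw [LV3] at hi; simp [Hsgp]; omega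
      · rw [LV4] at hi; simp [Hsgp]; omega
      · rw [LV5] at hi; simp [Hsgp]; omega
      · rw [LV6] at hi; simp [Hsgp]; omega
      · rw [LV7] at hi; simp [Hsgp]; omega
      · rw [LV8] at hi; simp [Hsgp]; omega
      · rw [LV9] at hi; simp [Hsgp]; omega
      · rw [LV10] at hi; simp [Hsgp]; omega
      · rw [LV11] at hi; simp [Hsgp]; omega
    · push_neg at hc
      have h13 : (13:ℕ) ≤ i + 1 := by omega
      have hpow : (2:ℕ)^222 ≤ (i+1)^60 :=
        le_trans (by norm_num : (2:ℕ)^222 ≤ 13^60) (Nat.pow_le_pow_left h13 60)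
      have hlog := logb_ge 222 (i+1) (by omega) hpow
      have hge : (45:ℤ) ≤ floorAlpha ((12:ℝ) * Lseq i) 0.40 := by
        apply floorAlpha_ge 45 _ 0.40 (by norm_num)
        have eL : Lseq i = Real.logb 2 ((i+1:ℕ):ℝ) := by
          unfold Lseq; push_cast; ring_nf
        rw [eL]
        push_cast at hlog ⊢
        norm_num
        linarith
      rw [← hi] at hge
      have : 45 ≤ n := by exact_mod_cast hge
      simp [Hsgp]
      omega

lemma hF_discr : Hsgp = discr Fgold 12 1 := by
  have p0 : (0:ℝ) ≤ phi - 1 := by linarith [p_lo]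
  have p1 : phi - 1 < 1 := by linarith [p_hi]
  ext n
  simp only [discr, Set.mem_setOf_eq, Nat.cast_ofNat]
  constructor
  · intro hn
    simp only [Hsgp, Set.mem_union, Set.mem_insert_iff, Set.mem_singleton_iff,
      Set.mem_setOf_eq] at hn
    rcases hn with (h|h|h|h|h|h|h|h|h|h|h|h) | h
    · exact ⟨0, by subst h; rw [FG0]; norm_num⟩
    · exact ⟨1, by subst h; rw [FG1]; norm_num⟩
    · exact ⟨2, by subst h; rw [FG2]; norm_num⟩
    · exact ⟨3, by subst h; rw [FG3]; norm_num⟩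
    · exact ⟨4, by subst h; rw [FG4]; norm_num⟩
    · exact ⟨5, by subst h; rw [FG5]; norm_num⟩
    · exact ⟨6, by subst h; rw [FG6]; norm_num⟩
    · exact ⟨7, by subst h; rw [FG7]; norm_num⟩
    · exact ⟨8, by subst h; rw [FG8]; norm_num⟩
    · exact ⟨9, by subst h; rw [FG9]; norm_num⟩
    · exact ⟨10, by subst h; rw [FG10]; norm_num⟩
    · exact ⟨11, by subst h; rw [FG11]; norm_num⟩
    · by_cases h48 : n ≤ 47
      · have h3 : n = 45 ∨ n = 46 ∨ n = 47 := by omega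
        rcases h3 with h3|h3|h3
        · exact ⟨12, by subst h3; rw [FG12]; norm_num⟩
        · exact ⟨13, by subst h3; rw [FG13]; norm_num⟩
        · exact ⟨14, by subst h3; rw [FG14]; norm_num⟩
      · push_neg at h48
        set l := n / 12 with hldef
        have hl4 : 4 ≤ l := by omega
        have hk : n % 12 = 0 ∨ n % 12 = 1 ∨ n % 12 = 2 ∨ n % 12 = 3 ∨ n % 12 = 4 ∨
            n % 12 = 5 ∨ n % 12 = 6 ∨ n % 12 = 7 ∨ n % 12 = 8 ∨ n % 12 = 9 ∨
            n % 12 = 10 ∨ n % 12 = 11 := by omega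
        rcases hk with hk|hk|hk|hk|hk|hk|hk|hk|hk|hk|hk|hk
        · -- k = 0
          have hnlk : n = 12*l + 0 := by omega
          refine ⟨2^l + 0*2^(l-4) - 1, ?_⟩
          rw [FGwit l 0 hl4 (by norm_num), floorAlpha_one,
            floor12 l 0 (n:ℤ) _ (by push_cast; exact_mod_cast hnlk)
              (by exact_mod_cast (ff_4_0).1) (by exact_mod_cast (ff_4_0).2)]
        · -- k = 1
          have hnlk : n = 12*l + 1 := by omega
          refine ⟨2^l + 1*2^(l-4) - 1, ?_⟩
          rw [FGwit l 1 hl4 (by norm_num), floorAlpha_one,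
            floor12 l 1 (n:ℤ) _ (by push_cast; exact_mod_cast hnlk)
              (by exact_mod_cast (ff_4_1).1) (by exact_mod_cast (ff_4_1).2)]
        · -- k = 2
          have hnlk : n = 12*l + 2 := by omega
          refine ⟨2^l + 2*2^(l-4) - 1, ?_⟩
          rw [FGwit l 2 hl4 (by norm_num), floorAlpha_one,
            floor12 l 2 (n:ℤ) _ (by push_cast; exact_mod_cast hnlk)
              (by exact_mod_cast (ff_4_2).1) (by exact_mod_cast (ff_4_2).2)]
        · -- k = 3
          have hnlk : n = 12*l + 3 := by omega
          refine ⟨2^l + 3*2^(l-4) - 1, ?_⟩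
          rw [FGwit l 3 hl4 (by norm_num), floorAlpha_one,
            floor12 l 3 (n:ℤ) _ (by push_cast; exact_mod_cast hnlk)
              (by exact_mod_cast (ff_4_3).1) (by exact_mod_cast (ff_4_3).2)]
        · -- k = 4
          have hnlk : n = 12*l + 4 := by omega
          refine ⟨2^l + 4*2^(l-4) - 1, ?_⟩
          rw [FGwit l 4 hl4 (by norm_num), floorAlpha_one,
            floor12 l 4 (n:ℤ) _ (by push_cast; exact_mod_cast hnlk)
              (by exact_mod_cast (ff_4_4).1) (by exact_mod_cast (ff_4_4).2)]
        · -- k = 5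
          have hnlk : n = 12*l + 5 := by omega
          refine ⟨2^l + 5*2^(l-4) - 1, ?_⟩
          rw [FGwit l 5 hl4 (by norm_num), floorAlpha_one,
            floor12 l 5 (n:ℤ) _ (by push_cast; exact_mod_cast hnlk)
              (by exact_mod_cast (ff_4_5).1) (by exact_mod_cast (ff_4_5).2)]
        · -- k = 6
          have hnlk : n = 12*l + 6 := by omega
          refine ⟨2^l + 6*2^(l-4) - 1, ?_⟩
          rw [FGwit l 6 hl4 (by norm_num), floorAlpha_one,
            floor12 l 6 (n:ℤ) _ (by push_cast; exact_mod_cast hnlk)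
              (by exact_mod_cast (ff_4_6).1) (by exact_mod_cast (ff_4_6).2)]
        · -- k = 7
          have hnlk : n = 12*l + 7 := by omega
          refine ⟨2^l + 7*2^(l-4) - 1, ?_⟩
          rw [FGwit l 7 hl4 (by norm_num), floorAlpha_one,
            floor12 l 7 (n:ℤ) _ (by push_cast; exact_mod_cast hnlk)
              (by exact_mod_cast (ff_4_7).1) (by exact_mod_cast (ff_4_7).2)]
        · -- k = 8
          have hnlk : n = 12*l + 8 := by omega
          refine ⟨2^l + 9*2^(l-4) - 1, ?_⟩
          rw [FGwit l 9 hl4 (by norm_num), floorAlpha_one,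
            floor12 l 8 (n:ℤ) _ (by push_cast; exact_mod_cast hnlk)
              (by exact_mod_cast (ff_4_9).1) (by exact_mod_cast (ff_4_9).2)]
        · -- k = 9
          have hnlk : n = 12*l + 9 := by omega
          refine ⟨2^l + 10*2^(l-4) - 1, ?_⟩
          rw [FGwit l 10 hl4 (by norm_num), floorAlpha_one,
            floor12 l 9 (n:ℤ) _ (by push_cast; exact_mod_cast hnlk)
              (by exact_mod_cast (ff_4_10).1) (by exact_mod_cast (ff_4_10).2)]
        · -- k = 10
          have hnlk : n = 12*l + 10 := by omega
          refine ⟨2^l + 12*2^(l-4) - 1, ?_⟩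
          rw [FGwit l 12 hl4 (by norm_num), floorAlpha_one,
            floor12 l 10 (n:ℤ) _ (by push_cast; exact_mod_cast hnlk)
              (by exact_mod_cast (ff_4_12).1) (by exact_mod_cast (ff_4_12).2)]
        · -- k = 11
          have hnlk : n = 12*l + 11 := by omega
          refine ⟨2^l + 14*2^(l-4) - 1, ?_⟩
          rw [FGwit l 14 hl4 (by norm_num), floorAlpha_one,
            floor12 l 11 (n:ℤ) _ (by push_cast; exact_mod_cast hnlk)
              (by exact_mod_cast (ff_4_14).1) (by exact_mod_cast (ff_4_14).2)]
  · rintro ⟨i, hi⟩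
    by_cases hc : i ≤ 14
    · interval_cases i
      · rw [FG0] at hi; simp [Hsgp]; omega
      · rw [FG1] at hi; simp [Hsgp]; omega
      · rw [FG2] at hi; simp [Hsgp]; omega
      · rw [FG3] at hi; simp [Hsgp]; omega
      · rw [FG4] at hi; simp [Hsgp]; omega
      · rw [FG5] at hi; simp [Hsgp]; omega
      · rw [FG6] at hi; simp [Hsgp]; omega
      · rw [FG7] at hi; simp [Hsgp]; omega
      · rw [FG8] at hi; simp [Hsgp]; omega
      · rw [FG9] at hi; simp [Hsgp]; omega
      · rw [FG10] at hi; simp [Hsgp]; omega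
      · rw [FG11] at hi; simp [Hsgp]; omega
      · rw [FG12] at hi; simp [Hsgp]; omega
      · rw [FG13] at hi; simp [Hsgp]; omega
      · rw [FG14] at hi; simp [Hsgp]; omega
    · push_neg at hc
      have h16 : (2:ℕ)^4 ≤ i+1 := by omega
      have hl4 : 4 ≤ Nat.log 2 (i+1) :=
        (Nat.le_log_iff_pow_le (by norm_num) (by omega)).mpr h16
      have hge : (48:ℤ) ≤ floorAlpha ((12:ℝ) * Fgold i) 1 := by
        rw [floorAlpha_one]
        apply Int.le_floor.mpr
        have hf := (fcut_range p0 p1 (Nat.log 2 (i+1)) (i+1-2^(Nat.log 2 (i+1)))).1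
        have hl4' : (4:ℝ) ≤ (Nat.log 2 (i+1) : ℝ) := by exact_mod_cast hl4
        unfold Fgold
        push_cast
        linarith
      rw [← hi] at hge
      have : 48 ≤ n := by exact_mod_cast hge
      simp [Hsgp]
      omega

/-- `H` is a numerical semigroup of multiplicity `12`, and it is
simultaneously a discretization of `L` and of `F` with multiplicity `12`:
`H = ⌊12L⌋_{0.40} = ⌊12F⌋_{1.00}` (the latter being the flooring discretization). -/
theorem H_is_discretization :
    IsNumSgp Hsgp ∧
    sInf {n : ℕ | n ∈ Hsgp ∧ n ≠ 0} = 12 ∧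
    Hsgp = discr Lseq 12 0.40 ∧
    Hsgp = discr Fgold 12 1 := by
  refine ⟨⟨?_, ?_, ?_⟩, ?_, hL_discr, hF_discr⟩
  · simp [Hsgp]
  · apply Set.Finite.subset (Set.finite_Iio 45)
    intro x hx
    simp only [Hsgp, Set.mem_compl_iff, Set.mem_union, Set.mem_insert_iff,
      Set.mem_singleton_iff, Set.mem_setOf_eq, not_or] at hx
    simp only [Set.mem_Iio]
    omega
  · intro a ha b hb
    simp only [Hsgp, Set.mem_union, Set.mem_insert_iff, Set.mem_singleton_iff,
      Set.mem_setOf_eq] at ha hb ⊢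
    omega
  · have h12 : (12:ℕ) ∈ {n : ℕ | n ∈ Hsgp ∧ n ≠ 0} := ⟨by simp [Hsgp], by norm_num⟩
    apply le_antisymm
    · exact Nat.sInf_le h12
    · apply le_csInf ⟨12, h12⟩
      intro m hm
      obtain ⟨hm1, hm2⟩ := hm
      simp only [Hsgp, Set.mem_union, Set.mem_insert_iff, Set.mem_singleton_iff,
        Set.mem_setOf_eq] at hm1
      omega
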